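/- Let A be a unital complex algebra and let a ∈ A be such that neither i nor -i belongs to the spectrum of a, and let g := (a - i·1) * (a + i·1)⁻¹ be its Cayley transform. Then the spectrum of a is contained in ℝ (every z ∈ spectrum ℂ a has z.im = 0) if and only if the spectrum of g is contained in the unit circle (every z ∈ spectrum ℂ g has |z| = 1). -/

import Mathlib

lemma isUnit_mul_isUnit_right {A : Type*} [Monoid A] {x v : A} (hv : IsUnit v) :
    IsUnit (x * v) ↔ IsUnit x := by
  conv_lhs => rw [← hv.unit_spec]
  exact Units.isUnit_mul_units _ hv.unit

lemma isUnit_mul_isUnit_left {A : Type*} [Monoid A] {x v : A} (hv : IsUnit v) :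
    IsUnit (v * x) ↔ IsUnit x := by
  conv_lhs => rw [← hv.unit_spec]
  exact Units.isUnit_units_mul hv.unit _

lemma cayley_unit {A : Type*} [Ring A] [Algebra ℂ A]
    (a : A) (hmi : -Complex.I ∉ spectrum ℂ a) :
    IsUnit (a + algebraMap ℂ A Complex.I) := by
  have h := spectrum.notMem_iff.mp hmi
  rw [map_neg] at h
  have e : -(algebraMap ℂ A Complex.I) - a = -(a + algebraMap ℂ A Complex.I) := by abel
  rw [e, IsUnit.neg_iff] at h
  exact h

lemma cayley_inv_unit {A : Type*} [Ring A] [Algebra ℂ A]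
    (a : A) (hmi : -Complex.I ∉ spectrum ℂ a) :
    IsUnit (Ring.inverse (a + algebraMap ℂ A Complex.I)) := by
  have hu := cayley_unit a hmi
  rw [← hu.unit_spec, Ring.inverse_unit]
  exact hu.unit⁻¹.isUnit

lemma cayley_key {A : Type*} [Ring A] [Algebra ℂ A]
    (a : A) (hmi : -Complex.I ∉ spectrum ℂ a)
    (g : A) (hg : g = (a - algebraMap ℂ A Complex.I) * Ring.inverse (a + algebraMap ℂ A Complex.I))
    (l m : ℂ) (hl : l ≠ 1) (hm : m = Complex.I * (1 + l) / (1 - l)) :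
    (l ∈ spectrum ℂ g ↔ m ∈ spectrum ℂ a) := by
  have hu := cayley_unit a hmi
  have h1l : (1 : ℂ) - l ≠ 0 := sub_ne_zero.mpr (Ne.symm hl)
  have hinv : (a + algebraMap ℂ A Complex.I) * Ring.inverse (a + algebraMap ℂ A Complex.I) = 1 :=
    Ring.mul_inverse_cancel _ hu
  have hid : algebraMap ℂ A l - g
      = algebraMap ℂ A (1 - l) * (algebraMap ℂ A m - a)
        * Ring.inverse (a + algebraMap ℂ A Complex.I) := by
    rw [hg]
    have step : algebraMap ℂ A l
        = algebraMap ℂ A l * (a + algebraMap ℂ A Complex.I)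
          * Ring.inverse (a + algebraMap ℂ A Complex.I) := by
      rw [mul_assoc, hinv, mul_one]
    rw [step, ← sub_mul]
    congr 1
    have hms : (1 - l) * m = Complex.I * (1 + l) := by
      rw [hm]; field_simp
    simp only [Algebra.algebraMap_eq_smul_one, smul_one_mul]
    match_scalars
    all_goals first | ring1 | linear_combination -hms
  have huu := cayley_inv_unit a hmi
  have hsc : IsUnit (algebraMap ℂ A (1 - l)) :=
    (isUnit_iff_ne_zero.mpr h1l).map (algebraMap ℂ A)
  rw [spectrum.mem_iff, spectrum.mem_iff, hid, not_iff_not,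
    isUnit_mul_isUnit_right huu, isUnit_mul_isUnit_left hsc]

lemma cayley_one_not_mem {A : Type*} [Ring A] [Algebra ℂ A]
    (a : A) (hmi : -Complex.I ∉ spectrum ℂ a)
    (g : A)
    (hg : g = (a - algebraMap ℂ A Complex.I) * Ring.inverse (a + algebraMap ℂ A Complex.I)) :
    (1 : ℂ) ∉ spectrum ℂ g := by
  have hu := cayley_unit a hmi
  have hinv : (a + algebraMap ℂ A Complex.I) * Ring.inverse (a + algebraMap ℂ A Complex.I) = 1 :=
    Ring.mul_inverse_cancel _ hu
  have huu := cayley_inv_unit a hmi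
  rw [spectrum.notMem_iff]
  have hid : algebraMap ℂ A 1 - g
      = algebraMap ℂ A (2 * Complex.I) * Ring.inverse (a + algebraMap ℂ A Complex.I) := by
    rw [hg]
    have step : algebraMap ℂ A 1
        = algebraMap ℂ A 1 * (a + algebraMap ℂ A Complex.I)
          * Ring.inverse (a + algebraMap ℂ A Complex.I) := by
      rw [mul_assoc, hinv, mul_one]
    rw [step, ← sub_mul]
    congr 1
    simp only [Algebra.algebraMap_eq_smul_one, smul_one_mul]
    match_scalars
    all_goals ring1
  rw [hid, isUnit_mul_isUnit_right huu]
  exact ((isUnit_iff_ne_zero.mpr (by simp [Complex.I_ne_zero] : (2:ℂ) * Complex.I ≠ 0)).map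
    (algebraMap ℂ A))

theorem stmt11 {A : Type*} [Ring A] [Algebra ℂ A]
    (a : A) (hi : Complex.I ∉ spectrum ℂ a) (hmi : -Complex.I ∉ spectrum ℂ a)
    (g : A) (hg : g = (a - algebraMap ℂ A Complex.I) * Ring.inverse (a + algebraMap ℂ A Complex.I)) :
    (∀ z ∈ spectrum ℂ a, z.im = 0) ↔ (∀ z ∈ spectrum ℂ g, ‖z‖ = 1) := by
  constructor
  · intro h z hz
    have hz1 : z ≠ 1 := fun e => cayley_one_not_mem a hmi g hg (e ▸ hz)
    set m := Complex.I * (1 + z) / (1 - z) with hm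
    have hmem : m ∈ spectrum ℂ a := (cayley_key a hmi g hg z m hz1 hm).mp hz
    have him : m.im = 0 := h m hmem
    have h1z : (1 : ℂ) - z ≠ 0 := sub_ne_zero.mpr (Ne.symm hz1)
    have hconj : (starRingEnd ℂ) m = m := Complex.conj_eq_iff_im.mpr him
    rw [hm, map_div₀, map_mul, map_add, map_one, map_sub, map_one, Complex.conj_I] at hconj
    have h1z' : (1 : ℂ) - (starRingEnd ℂ) z ≠ 0 := by
      intro e
      apply h1z
      have := congrArg (starRingEnd ℂ) e
      simpa using this
    field_simp at hconj
    have h2 : Complex.I * (2 - 2 * (z * (starRingEnd ℂ) z)) = 0 := by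
      linear_combination -Complex.I * hconj
    have hzz : z * (starRingEnd ℂ) z = 1 := by
      rcases mul_eq_zero.mp h2 with h3 | h3
      · exact absurd h3 Complex.I_ne_zero
      · linear_combination -h3 / 2
    have hns : Complex.normSq z = 1 := by
      have := Complex.mul_conj z
      rw [hzz] at this
      exact_mod_cast this.symm
    have habs2 : ‖z‖ ^ 2 = 1 := by rw [Complex.sq_norm, hns]
    nlinarith [norm_nonneg z]
  · intro h z hz
    have hzi : z ≠ Complex.I := fun e => hi (e ▸ hz)
    have hzmi : z ≠ -Complex.I := fun e => hmi (e ▸ hz)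
    have hzi' : z + Complex.I ≠ 0 := fun e => hzmi (by linear_combination e)
    set l := (z - Complex.I) / (z + Complex.I) with hldef
    have hl1 : l ≠ 1 := by
      intro e
      rw [hldef, div_eq_one_iff_eq hzi'] at e
      exact Complex.I_ne_zero (by linear_combination -e/2)
    have hm : z = Complex.I * (1 + l) / (1 - l) := by
      rw [hldef]
      have hsub : (1 : ℂ) - (z - Complex.I) / (z + Complex.I) ≠ 0 := by
        rw [sub_ne_zero]
        intro e
        rw [eq_comm, div_eq_one_iff_eq hzi'] at e
        exact Complex.I_ne_zero (by linear_combination -e/2)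
      field_simp
      ring
    have hmem : l ∈ spectrum ℂ g := (cayley_key a hmi g hg l z hl1 hm).mpr hz
    have habs : ‖l‖ = 1 := h l hmem
    rw [hldef, norm_div, div_eq_one_iff_eq
      (by simpa using hzi' : ‖z + Complex.I‖ ≠ 0)] at habs
    have hsq : Complex.normSq (z - Complex.I) = Complex.normSq (z + Complex.I) := by
      have := congrArg (fun t => t ^ 2) habs
      simpa [Complex.sq_norm] using this
    simp only [Complex.normSq_apply, Complex.sub_re, Complex.sub_im, Complex.add_re,
      Complex.add_im, Complex.I_re, Complex.I_im] at hsq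
    linarith
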